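/- If A and B are g×n totally unimodular matrices (every square submatrix has determinant in {0,1,-1}) with the same support (a_{ij} ≠ 0 if and only if b_{ij} ≠ 0 for all i,j), then A can be transformed into B by a sequence of row negations and column negations; equivalently, there exist diagonal matrices D ∈ GL_g(ℤ) and E ∈ GL_n(ℤ) with diagonal entries ±1 such that D·A·E = B. -/

import Mathlib

namespace TruemperAux

lemma sign_cases {x : ℝ} (hx : x ∈ Set.range (SignType.cast : SignType → ℝ)) :
    x = 0 ∨ x = 1 ∨ x = -1 := by
  obtain ⟨s, rfl⟩ := hx; cases s <;> simp

lemma pm_of {x : ℝ} (hx : x ∈ Set.range (SignType.cast : SignType → ℝ)) (h0 : x ≠ 0) :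
    x = 1 ∨ x = -1 := by
  rcases sign_cases hx with h | h | h
  · exact absurd h h0
  · exact Or.inl h
  · exact Or.inr h

lemma pm_mul {x y : ℝ} (hx : x = 1 ∨ x = -1) (hy : y = 1 ∨ y = -1) :
    x * y = 1 ∨ x * y = -1 := by
  rcases hx with rfl | rfl <;> rcases hy with rfl | rfl <;> norm_num

lemma prod_pm {α : Type*} [Fintype α] {p : α → ℝ} (hp : ∀ i, p i = 1 ∨ p i = -1) :
    (∏ i, p i) = 1 ∨ (∏ i, p i) = -1 :=
  Finset.prod_induction p (fun x => x = 1 ∨ x = -1)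
    (fun _ _ => pm_mul) (Or.inl rfl) (fun i _ => hp i)

lemma pm_add_eq_zero {x y d : ℝ} (hx : x = 1 ∨ x = -1) (hy : y = 1 ∨ y = -1)
    (hd : d = 0 ∨ d = 1 ∨ d = -1) (hxy : x + y = d) : x + y = 0 := by
  rcases hx with rfl | rfl <;> rcases hy with rfl | rfl <;>
    rcases hd with rfl | rfl | rfl <;> linarith

def IsPath {g n : ℕ} (A : Matrix (Fin (g + 1)) (Fin n) ℝ) (m : ℕ)
    (I : ℕ → Fin (g + 1)) (J : ℕ → Fin n) : Prop :=
  ∀ t < m, I t ≠ Fin.last g ∧ A (I t) (J t) ≠ 0 ∧ A (I t) (J (t + 1)) ≠ 0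

def ConnL {g n : ℕ} (A : Matrix (Fin (g + 1)) (Fin n) ℝ) (m : ℕ) (x y : Fin n) : Prop :=
  ∃ I J, J 0 = x ∧ J m = y ∧ IsPath A m I J

variable {g n : ℕ} {A : Matrix (Fin (g + 1)) (Fin n) ℝ}

lemma conn_refl (x : Fin n) : ConnL A 0 x x :=
  ⟨fun _ => Fin.last g, fun _ => x, rfl, rfl, fun t ht => absurd ht (Nat.not_lt_zero t)⟩

lemma conn_single {i : Fin (g + 1)} {x y : Fin n} (hi : i ≠ Fin.last g)
    (hx : A i x ≠ 0) (hy : A i y ≠ 0) : ConnL A 1 x y := by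
  refine ⟨fun _ => i, fun t => if t = 0 then x else y, rfl, rfl, ?_⟩
  intro t ht
  have ht0 : t = 0 := by omega
  subst ht0
  exact ⟨hi, by simpa using hx, by simpa using hy⟩

lemma conn_prefix {m : ℕ} {I J} (hp : IsPath A m I J) {a : ℕ} (ha : a ≤ m) :
    ConnL A a (J 0) (J a) :=
  ⟨I, J, rfl, rfl, fun t ht => hp t (lt_of_lt_of_le ht ha)⟩

lemma conn_shift {m : ℕ} {I J} (hp : IsPath A m I J) {a ℓ : ℕ} (ha : a + ℓ ≤ m) :
    ConnL A ℓ (J a) (J (a + ℓ)) :=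
  ⟨fun u => I (a + u), fun u => J (a + u), rfl, rfl, fun t ht => hp (a + t) (by omega)⟩

lemma conn_suffix {m : ℕ} {I J} (hp : IsPath A m I J) {b : ℕ} (hb : b ≤ m) :
    ConnL A (m - b) (J b) (J m) := by
  have := conn_shift hp (a := b) (ℓ := m - b) (by omega)
  rwa [show b + (m - b) = m from by omega] at this

lemma conn_trans {m₁ m₂ : ℕ} {x y z : Fin n} (h₁ : ConnL A m₁ x y) (h₂ : ConnL A m₂ y z) :
    ConnL A (m₁ + m₂) x z := by
  obtain ⟨I₁, J₁, hx₁, hy₁, hp₁⟩ := h₁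
  obtain ⟨I₂, J₂, hy₂, hz₂, hp₂⟩ := h₂
  have hmid : J₁ m₁ = J₂ 0 := hy₁.trans hy₂.symm
  refine ⟨fun t => if t < m₁ then I₁ t else I₂ (t - m₁),
          fun t => if t ≤ m₁ then J₁ t else J₂ (t - m₁), by simpa using hx₁, ?_, ?_⟩
  · beta_reduce
    by_cases h : m₁ + m₂ ≤ m₁
    · have hm2 : m₂ = 0 := by omega
      subst hm2
      simpa using hmid.trans hz₂
    · rw [if_neg h]
      rw [show m₁ + m₂ - m₁ = m₂ from by omega]
      exact hz₂
  · intro t ht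
    beta_reduce
    by_cases htm : t < m₁
    · rw [if_pos htm, if_pos (le_of_lt htm), if_pos (by omega : t + 1 ≤ m₁)]
      exact hp₁ t htm
    · have h2 := hp₂ (t - m₁) (by omega)
      rw [if_neg htm]
      have hJt : (if t ≤ m₁ then J₁ t else J₂ (t - m₁)) = J₂ (t - m₁) := by
        split
        · have ht' : t = m₁ := by omega
          subst ht'
          rw [Nat.sub_self]
          exact hmid
        · rfl
      have hJt1 : (if t + 1 ≤ m₁ then J₁ (t + 1) else J₂ (t + 1 - m₁)) = J₂ (t - m₁ + 1) := by
        rw [if_neg (by omega), show t + 1 - m₁ = t - m₁ + 1 from by omega]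
      rw [hJt, hJt1]
      exact h2

lemma conn_symm {m : ℕ} {x y : Fin n} (h : ConnL A m x y) : ConnL A m y x := by
  obtain ⟨I, J, hx, hy, hp⟩ := h
  refine ⟨fun t => I (m - 1 - t), fun t => J (m - t), by simpa using hy, by
      beta_reduce; rw [Nat.sub_self]; exact hx, ?_⟩
  intro t ht
  beta_reduce
  have h0 := hp (m - 1 - t) (by omega)
  refine ⟨h0.1, ?_, ?_⟩
  · rw [show m - t = (m - 1 - t) + 1 from by omega]
    exact h0.2.2
  · rw [show m - (t + 1) = m - 1 - t from by omega]
    exact h0.2.1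

set_option maxHeartbeats 1000000 in
lemma key {B : Matrix (Fin (g + 1)) (Fin n) ℝ}
    (hA : A.IsTotallyUnimodular) (hB : B.IsTotallyUnimodular)
    (hsupp : ∀ i j, A i j ≠ 0 ↔ B i j ≠ 0)
    (htop : ∀ i j, i ≠ Fin.last g → A i j = B i j) (m : ℕ) :
    ∀ I J, IsPath A m I J →
      A (Fin.last g) (J 0) ≠ 0 → A (Fin.last g) (J m) ≠ 0 →
      A (Fin.last g) (J 0) * B (Fin.last g) (J 0)
        = A (Fin.last g) (J m) * B (Fin.last g) (J m) := by
  induction m using Nat.strong_induction_on with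
  | _ m IH =>
  intro I J hp h0 hm
  rcases Nat.eq_zero_or_pos m with hm0 | hm0
  · subst hm0; rfl
  by_cases hshort : ∃ m' < m, ConnL A m' (J 0) (J m)
  · obtain ⟨m', hm', I', J', hJ0, hJm, hp'⟩ := hshort
    have h := IH m' hm' I' J' hp' (by rw [hJ0]; exact h0) (by rw [hJm]; exact hm)
    rw [hJ0, hJm] at h
    exact h
  have contra : ∀ m', m' < m → ConnL A m' (J 0) (J m) → False :=
    fun m' h1 h2 => hshort ⟨m', h1, h2⟩
  by_cases hmid : ∃ t, 0 < t ∧ t < m ∧ A (Fin.last g) (J t) ≠ 0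
  · obtain ⟨t, ht0, htm, hrt⟩ := hmid
    have e1 := IH t htm I J (fun u hu => hp u (by omega)) h0 hrt
    have e2 := IH (m - t) (by omega) (fun u => I (t + u)) (fun u => J (t + u))
      (fun u hu => hp (t + u) (by omega)) hrt
      (by beta_reduce; rw [show t + (m - t) = m from by omega]; exact hm)
    beta_reduce at e2
    rw [show t + (m - t) = m from by omega] at e2
    rw [show t + 0 = t from rfl] at e2
    exact e1.trans e2
  have hmid0 : ∀ t, 0 < t → t < m → A (Fin.last g) (J t) = 0 := by
    intro t h1 h2
    by_contra hne
    exact hmid ⟨t, h1, h2, hne⟩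
  have hIne : ∀ t, t < m → I t ≠ Fin.last g := fun t ht => (hp t ht).1
  -- columns along the walk are injective
  have hJinj : ∀ a b : ℕ, a ≤ m → b ≤ m → J a = J b → a = b := by
    intro a b ha hb hab
    by_contra hne
    wlog hlt : a < b generalizing a b
    · exact this b a hb ha hab.symm (Ne.symm hne) (by omega)
    have c1 : ConnL A a (J 0) (J a) := conn_prefix hp ha
    have c2 : ConnL A (m - b) (J b) (J m) := conn_suffix hp hb
    have c2' : ConnL A (m - b) (J a) (J m) := by rw [hab]; exact c2
    exact contra (a + (m - b)) (by omega) (conn_trans c1 c2')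
  -- rows along the walk are injective
  have hIinj : ∀ a b : ℕ, a < b → b < m → I a ≠ I b := by
    intro a b hab hbm heq
    have h1 := hp a (by omega)
    have h2 := hp b hbm
    have c1 : ConnL A a (J 0) (J a) := conn_prefix hp (by omega)
    have cs : ConnL A 1 (J a) (J (b + 1)) :=
      conn_single h1.1 h1.2.1 (by rw [heq]; exact h2.2.2)
    have c2 : ConnL A (m - (b + 1)) (J (b + 1)) (J m) := conn_suffix hp (by omega)
    exact contra (a + 1 + (m - (b + 1))) (by omega)
      (conn_trans (conn_trans c1 cs) c2)
  -- no chords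
  have hchord : ∀ t v, t < m → v ≤ m → A (I t) (J v) ≠ 0 → v = t ∨ v = t + 1 := by
    intro t v htm hvm hAv
    by_contra hne
    push_neg at hne
    have hstep := hp t htm
    rcases Nat.lt_or_ge v t with hv | hv
    · have c1 : ConnL A v (J 0) (J v) := conn_prefix hp (by omega)
      have cs : ConnL A 1 (J v) (J (t + 1)) := conn_single hstep.1 hAv hstep.2.2
      have c2 : ConnL A (m - (t + 1)) (J (t + 1)) (J m) := conn_suffix hp (by omega)
      exact contra (v + 1 + (m - (t + 1))) (by omega)
        (conn_trans (conn_trans c1 cs) c2)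
    · have hv' : t + 1 < v := by omega
      have c1 : ConnL A t (J 0) (J t) := conn_prefix hp (by omega)
      have cs : ConnL A 1 (J t) (J v) := conn_single hstep.1 hstep.2.1 hAv
      have c2 : ConnL A (m - v) (J v) (J m) := conn_suffix hp (by omega)
      exact contra (t + 1 + (m - v)) (by omega)
        (conn_trans (conn_trans c1 cs) c2)
  -- the cycle submatrix
  set F : Fin (m + 1) → Fin (g + 1) :=
    fun t => Fin.cases (Fin.last g) (fun s : Fin m => I (s : ℕ)) t with hFdef
  set G : Fin (m + 1) → Fin n := fun t => J (t : ℕ) with hGdef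
  have hF0 : F 0 = Fin.last g := by simp [hFdef]
  have hFs : ∀ s : Fin m, F s.succ = I (s : ℕ) := fun s => by simp [hFdef]
  have hFinj : Function.Injective F := by
    intro a b hab
    rcases Fin.eq_zero_or_eq_succ a with rfl | ⟨a', rfl⟩ <;>
      rcases Fin.eq_zero_or_eq_succ b with rfl | ⟨b', rfl⟩
    · rfl
    · rw [hF0, hFs] at hab
      exact absurd hab.symm (hIne b' b'.isLt)
    · rw [hF0, hFs] at hab
      exact absurd hab (hIne a' a'.isLt)
    · rw [hFs, hFs] at hab
      congr 1
      by_contra hne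
      rcases Nat.lt_trichotomy (a' : ℕ) (b' : ℕ) with h | h | h
      · exact hIinj a' b' h b'.isLt hab
      · exact hne (Fin.ext h)
      · exact hIinj b' a' h a'.isLt hab.symm
  have hGinj : Function.Injective G :=
    fun a b hab => Fin.ext (hJinj a b (Fin.is_le a) (Fin.is_le b) hab)
  -- expansion of the determinant along the first row
  have h01 : (0 : Fin (m + 1)) ≠ Fin.last m := by
    intro h
    have := congrArg Fin.val h
    simp [Fin.val_last] at this
    omega
  have expand : ∀ M : Matrix (Fin (m + 1)) (Fin (m + 1)) ℝ,
      (∀ u : Fin (m + 1), u ≠ 0 → u ≠ Fin.last m → M 0 u = 0) →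
      M.det = M 0 0 * (M.submatrix Fin.succ Fin.succ).det
        + (-1 : ℝ) ^ m * M 0 (Fin.last m) * (M.submatrix Fin.succ Fin.castSucc).det := by
    intro M hmrow
    rw [Matrix.det_succ_row_zero]
    rw [← Finset.sum_subset (Finset.subset_univ {0, Fin.last m})
      (fun u _ hu => by
        have hu0 : u ≠ 0 := fun h => hu (by simp [h])
        have hul : u ≠ Fin.last m := fun h => hu (by simp [h])
        rw [hmrow u hu0 hul]
        ring)]
    rw [Finset.sum_pair h01]
    simp [Fin.succAbove_last, Fin.val_last]
  -- the two triangular minors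
  have hN0diag : ∀ s : Fin m, ((A.submatrix F G).submatrix Fin.succ Fin.succ) s s
      = A (I (s : ℕ)) (J ((s : ℕ) + 1)) := by
    intro s
    show A (F s.succ) (G s.succ) = _
    rw [hFs]
    rfl
  have hN0tri : ((A.submatrix F G).submatrix Fin.succ Fin.succ).BlockTriangular
      OrderDual.toDual := by
    intro s u hsu
    have hsu' : (s : ℕ) < (u : ℕ) := hsu
    show A (F s.succ) (G u.succ) = 0
    rw [hFs]
    by_contra hne
    have := hchord (s : ℕ) ((u : ℕ) + 1) s.isLt (by omega) hne
    omega
  have hNLdiag : ∀ s : Fin m, ((A.submatrix F G).submatrix Fin.succ Fin.castSucc) s s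
      = A (I (s : ℕ)) (J (s : ℕ)) := by
    intro s
    show A (F s.succ) (G s.castSucc) = _
    rw [hFs]
    rfl
  have hNLtri : ((A.submatrix F G).submatrix Fin.succ Fin.castSucc).BlockTriangular id := by
    intro s u hsu
    have hsu' : (u : ℕ) < (s : ℕ) := hsu
    show A (F s.succ) (G u.castSucc) = 0
    rw [hFs]
    by_contra hne
    have := hchord (s : ℕ) (u : ℕ) s.isLt (by omega) hne
    omega
  have hD : ((A.submatrix F G).submatrix Fin.succ Fin.succ).det
      = ∏ s : Fin m, A (I (s : ℕ)) (J ((s : ℕ) + 1)) := by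
    rw [Matrix.det_of_lowerTriangular _ hN0tri]
    exact Finset.prod_congr rfl (fun s _ => hN0diag s)
  have hE : ((A.submatrix F G).submatrix Fin.succ Fin.castSucc).det
      = ∏ s : Fin m, A (I (s : ℕ)) (J (s : ℕ)) := by
    rw [Matrix.det_of_upperTriangular hNLtri]
    exact Finset.prod_congr rfl (fun s _ => hNLdiag s)
  have hD_pm : ((A.submatrix F G).submatrix Fin.succ Fin.succ).det = 1
      ∨ ((A.submatrix F G).submatrix Fin.succ Fin.succ).det = -1 := by
    rw [hD]
    exact prod_pm (fun s => pm_of (hA.apply _ _) (hp (s : ℕ) s.isLt).2.2)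
  have hE_pm : ((A.submatrix F G).submatrix Fin.succ Fin.castSucc).det = 1
      ∨ ((A.submatrix F G).submatrix Fin.succ Fin.castSucc).det = -1 := by
    rw [hE]
    exact prod_pm (fun s => pm_of (hA.apply _ _) (hp (s : ℕ) s.isLt).2.1)
  -- the B minors coincide with the A minors
  have hBD : ((B.submatrix F G).submatrix Fin.succ Fin.succ)
      = ((A.submatrix F G).submatrix Fin.succ Fin.succ) := by
    ext s u
    show B (F s.succ) (G u.succ) = A (F s.succ) (G u.succ)
    rw [hFs]
    exact (htop _ _ (hIne (s : ℕ) s.isLt)).symm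
  have hBE : ((B.submatrix F G).submatrix Fin.succ Fin.castSucc)
      = ((A.submatrix F G).submatrix Fin.succ Fin.castSucc) := by
    ext s u
    show B (F s.succ) (G u.castSucc) = A (F s.succ) (G u.castSucc)
    rw [hFs]
    exact (htop _ _ (hIne (s : ℕ) s.isLt)).symm
  -- first row entries
  have hval : ∀ u : Fin (m + 1), u ≠ 0 → u ≠ Fin.last m → 0 < (u : ℕ) ∧ (u : ℕ) < m := by
    intro u hu0 hul
    have h1 : (u : ℕ) ≠ 0 := fun h => hu0 (Fin.ext (by simpa using h))
    have h2 : (u : ℕ) ≠ m := fun h => hul (Fin.ext (by simpa [Fin.val_last] using h))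
    have := Fin.is_le u
    omega
  have hrow0A : ∀ u : Fin (m + 1), u ≠ 0 → u ≠ Fin.last m → (A.submatrix F G) 0 u = 0 := by
    intro u hu0 hul
    show A (F 0) (G u) = 0
    rw [hF0]
    exact hmid0 (u : ℕ) (hval u hu0 hul).1 (hval u hu0 hul).2
  have hrow0B : ∀ u : Fin (m + 1), u ≠ 0 → u ≠ Fin.last m → (B.submatrix F G) 0 u = 0 := by
    intro u hu0 hul
    show B (F 0) (G u) = 0
    rw [hF0]
    by_contra hne
    exact (hsupp _ _).mpr hne (hmid0 (u : ℕ) (hval u hu0 hul).1 (hval u hu0 hul).2)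
  have hdetA := expand (A.submatrix F G) hrow0A
  have hdetB := expand (B.submatrix F G) hrow0B
  rw [hBD, hBE] at hdetB
  have hA00 : (A.submatrix F G) 0 0 = A (Fin.last g) (J 0) := by
    show A (F 0) (G 0) = _
    rw [hF0]
    congr 1
  have hA0L : (A.submatrix F G) 0 (Fin.last m) = A (Fin.last g) (J m) := by
    show A (F 0) (G (Fin.last m)) = _
    rw [hF0]
    congr 1
  have hB00 : (B.submatrix F G) 0 0 = B (Fin.last g) (J 0) := by
    show B (F 0) (G 0) = _
    rw [hF0]
    congr 1
  have hB0L : (B.submatrix F G) 0 (Fin.last m) = B (Fin.last g) (J m) := by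
    show B (F 0) (G (Fin.last m)) = _
    rw [hF0]
    congr 1
  rw [hA00, hA0L] at hdetA
  rw [hB00, hB0L] at hdetB
  have hdetApm := sign_cases (hA (m + 1) F G hFinj hGinj)
  have hdetBpm := sign_cases (hB (m + 1) F G hFinj hGinj)
  have hsig : ((-1 : ℝ) ^ m = 1 ∨ (-1 : ℝ) ^ m = -1) := by
    rcases Nat.even_or_odd m with h | h
    · exact Or.inl h.neg_one_pow
    · exact Or.inr h.neg_one_pow
  have ha_pm := pm_of (hA.apply (Fin.last g) (J 0)) h0
  have hb_pm := pm_of (hA.apply (Fin.last g) (J m)) hm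
  have hsB0 : B (Fin.last g) (J 0) ≠ 0 := (hsupp _ _).mp h0
  have hsBm : B (Fin.last g) (J m) ≠ 0 := (hsupp _ _).mp hm
  have ha'_pm := pm_of (hB.apply (Fin.last g) (J 0)) hsB0
  have hb'_pm := pm_of (hB.apply (Fin.last g) (J m)) hsBm
  set D := ((A.submatrix F G).submatrix Fin.succ Fin.succ).det with hDdef
  set E := ((A.submatrix F G).submatrix Fin.succ Fin.castSucc).det with hEdef
  have hzA : A (Fin.last g) (J 0) * D + (-1 : ℝ) ^ m * A (Fin.last g) (J m) * E = 0 :=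
    pm_add_eq_zero (pm_mul ha_pm hD_pm) (pm_mul (pm_mul hsig hb_pm) hE_pm) hdetApm hdetA.symm
  have hzB : B (Fin.last g) (J 0) * D + (-1 : ℝ) ^ m * B (Fin.last g) (J m) * E = 0 :=
    pm_add_eq_zero (pm_mul ha'_pm hD_pm) (pm_mul (pm_mul hsig hb'_pm) hE_pm) hdetBpm hdetB.symm
  have hD2 : D * D = 1 := by rcases hD_pm with h | h <;> rw [h] <;> norm_num
  have hE2 : E * E = 1 := by rcases hE_pm with h | h <;> rw [h] <;> norm_num
  have hs2 : ((-1 : ℝ) ^ m) * (-1 : ℝ) ^ m = 1 := by rw [← mul_pow]; norm_num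
  have e1 : A (Fin.last g) (J 0) * D = -((-1 : ℝ) ^ m * A (Fin.last g) (J m) * E) := by
    linarith
  have e2 : B (Fin.last g) (J 0) * D = -((-1 : ℝ) ^ m * B (Fin.last g) (J m) * E) := by
    linarith
  have hmain : A (Fin.last g) (J 0) * B (Fin.last g) (J 0) * (D * D)
      = A (Fin.last g) (J m) * B (Fin.last g) (J m)
        * (((-1 : ℝ) ^ m * (-1 : ℝ) ^ m) * (E * E)) := by
    calc A (Fin.last g) (J 0) * B (Fin.last g) (J 0) * (D * D)
        = (A (Fin.last g) (J 0) * D) * (B (Fin.last g) (J 0) * D) := by ring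
      _ = (-((-1 : ℝ) ^ m * A (Fin.last g) (J m) * E))
            * (-((-1 : ℝ) ^ m * B (Fin.last g) (J m) * E)) := by rw [e1, e2]
      _ = _ := by ring
  rw [hD2, hs2, hE2] at hmain
  simpa using hmain


lemma dae_apply {m n : ℕ} (d : Fin m → ℝ) (e : Fin n → ℝ) (M : Matrix (Fin m) (Fin n) ℝ)
    (i : Fin m) (j : Fin n) :
    (Matrix.diagonal d * M * Matrix.diagonal e) i j = d i * M i j * e j := by
  rw [Matrix.mul_diagonal, Matrix.diagonal_mul]

lemma tu_scale {m n : ℕ} {M : Matrix (Fin m) (Fin n) ℝ} (hM : M.IsTotallyUnimodular)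
    {d : Fin m → ℝ} {e : Fin n → ℝ} (hd : ∀ i, d i = 1 ∨ d i = -1)
    (he : ∀ j, e j = 1 ∨ e j = -1) :
    (Matrix.diagonal d * M * Matrix.diagonal e).IsTotallyUnimodular := by
  rw [Matrix.isTotallyUnimodular_iff]
  intro k f g
  have hsub : (Matrix.diagonal d * M * Matrix.diagonal e).submatrix f g
      = Matrix.diagonal (d ∘ f) * (M.submatrix f g) * Matrix.diagonal (e ∘ g) := by
    ext i j
    simp [Matrix.submatrix_apply, dae_apply]
  rw [hsub, Matrix.det_mul, Matrix.det_mul, Matrix.det_diagonal, Matrix.det_diagonal]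
  rw [Matrix.isTotallyUnimodular_iff] at hM
  have h1 := sign_cases (hM k f g)
  have h2 := prod_pm (fun i => hd (f i))
  have h3 := prod_pm (fun j => he (g j))
  simp only [Function.comp]
  have hgoal : ∀ x : ℝ, x = 0 ∨ x = 1 ∨ x = -1 → x ∈ Set.range (SignType.cast : SignType → ℝ) := by
    rintro x (rfl | rfl | rfl)
    exacts [⟨0, rfl⟩, ⟨1, rfl⟩, ⟨-1, by simp⟩]
  apply hgoal
  rcases h1 with h | h | h <;> rcases h2 with h2 | h2 <;> rcases h3 with h3 | h3 <;>
    rw [h, h2, h3] <;> norm_num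


set_option maxHeartbeats 1000000 in
lemma step {g n : ℕ} (A B : Matrix (Fin (g + 1)) (Fin n) ℝ)
    (hA : A.IsTotallyUnimodular) (hB : B.IsTotallyUnimodular)
    (hsupp : ∀ i j, A i j ≠ 0 ↔ B i j ≠ 0)
    (htop : ∀ i j, i ≠ Fin.last g → A i j = B i j) :
    ∃ d : Fin (g + 1) → ℝ, ∃ e : Fin n → ℝ,
      (∀ i, d i = 1 ∨ d i = -1) ∧ (∀ j, e j = 1 ∨ e j = -1) ∧
      Matrix.diagonal d * A * Matrix.diagonal e = B := by
  classical
  set L := Fin.last g with hLdef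
  -- Reachability through the top rows
  set Reach : Fin n → Fin n → Prop := fun x y => ∃ m, ConnL A m x y with hRdef
  have hR_refl : ∀ x, Reach x x := fun x => ⟨0, conn_refl x⟩
  have hR_symm : ∀ {x y}, Reach x y → Reach y x := fun ⟨m, h⟩ => ⟨m, conn_symm h⟩
  have hR_trans : ∀ {x y z}, Reach x y → Reach y z → Reach x z :=
    fun ⟨m₁, h₁⟩ ⟨m₂, h₂⟩ => ⟨m₁ + m₂, conn_trans h₁ h₂⟩
  have hc_key : ∀ {x y}, Reach x y → A L x ≠ 0 → A L y ≠ 0 →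
      A L x * B L x = A L y * B L y := by
    rintro x y ⟨m, I, J, hJ0, hJm, hp⟩ hx hy
    subst hJ0
    subst hJm
    exact key hA hB hsupp htop m I J hp hx hy
  -- the column signs
  set e : Fin n → ℝ := fun j =>
    if h : ∃ j', Reach j j' ∧ A L j' ≠ 0 then A L h.choose * B L h.choose else 1 with hedef
  have he_pm : ∀ j, e j = 1 ∨ e j = -1 := by
    intro j
    rw [hedef]
    beta_reduce
    split
    case isTrue h =>
      have hs := h.choose_spec
      exact pm_mul (pm_of (hA.apply _ _) hs.2) (pm_of (hB.apply _ _) ((hsupp _ _).mp hs.2))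
    case isFalse => exact Or.inl rfl
  have he_reach : ∀ j k, Reach j k → e j = e k := by
    intro j k hjk
    by_cases hj : ∃ j', Reach j j' ∧ A L j' ≠ 0
    · have hk : ∃ k', Reach k k' ∧ A L k' ≠ 0 :=
        ⟨hj.choose, hR_trans (hR_symm hjk) hj.choose_spec.1, hj.choose_spec.2⟩
      rw [hedef]
      beta_reduce
      rw [dif_pos hj, dif_pos hk]
      exact hc_key (hR_trans (hR_symm hj.choose_spec.1) (hR_trans hjk hk.choose_spec.1))
        hj.choose_spec.2 hk.choose_spec.2
    · have hk : ¬∃ k', Reach k k' ∧ A L k' ≠ 0 := by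
        rintro ⟨k', hkk', h0⟩
        exact hj ⟨k', hR_trans hjk hkk', h0⟩
      rw [hedef]
      beta_reduce
      rw [dif_neg hj, dif_neg hk]
  have he_supp : ∀ j, A L j ≠ 0 → e j = A L j * B L j := by
    intro j hj
    have hex : ∃ j', Reach j j' ∧ A L j' ≠ 0 := ⟨j, hR_refl j, hj⟩
    rw [hedef]
    beta_reduce
    rw [dif_pos hex]
    exact (hc_key hex.choose_spec.1 hj hex.choose_spec.2).symm
  -- the row signs
  set d : Fin (g + 1) → ℝ := fun i =>
    if h : i ≠ L ∧ ∃ j, A i j ≠ 0 then e h.2.choose else 1 with hddef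
  have hd_pm : ∀ i, d i = 1 ∨ d i = -1 := by
    intro i
    rw [hddef]
    beta_reduce
    split
    · exact he_pm _
    · exact Or.inl rfl
  have hd_adj : ∀ i j, i ≠ L → A i j ≠ 0 → d i = e j := by
    intro i j hiL hij
    have hcond : i ≠ L ∧ ∃ j, A i j ≠ 0 := ⟨hiL, ⟨j, hij⟩⟩
    rw [hddef]
    beta_reduce
    rw [dif_pos hcond]
    exact he_reach _ _ ⟨1, conn_single hiL hcond.2.choose_spec hij⟩
  refine ⟨d, e, hd_pm, he_pm, ?_⟩
  ext i j
  rw [dae_apply]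
  by_cases hiL : i = L
  · subst hiL
    have hdL : d L = 1 := by
      rw [hddef]
      beta_reduce
      rw [dif_neg (fun h => h.1 rfl)]
    rw [hdL, one_mul]
    by_cases h0 : A L j = 0
    · have hb0 : B L j = 0 := by
        by_contra hne
        exact (hsupp _ _).mpr hne h0
      rw [h0, hb0, zero_mul]
    · rw [he_supp j h0]
      rcases pm_of (hA.apply L j) h0 with h | h <;> rw [h] <;> ring
  · by_cases h0 : A i j = 0
    · rw [← htop i j hiL, h0]
      ring
    · rw [hd_adj i j hiL h0, ← htop i j hiL]
      rcases he_pm j with h | h <;> rw [h] <;> ring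

set_option maxHeartbeats 1000000 in
lemma main_aux : ∀ (g : ℕ) {n : ℕ} (A B : Matrix (Fin g) (Fin n) ℝ),
    A.IsTotallyUnimodular → B.IsTotallyUnimodular → (∀ i j, A i j ≠ 0 ↔ B i j ≠ 0) →
    ∃ d : Fin g → ℝ, ∃ e : Fin n → ℝ,
      (∀ i, d i = 1 ∨ d i = -1) ∧ (∀ j, e j = 1 ∨ e j = -1) ∧
      Matrix.diagonal d * A * Matrix.diagonal e = B := by
  intro g
  induction g with
  | zero =>
    intro n A B _ _ _
    refine ⟨fun _ => 1, fun _ => 1, fun _ => Or.inl rfl, fun _ => Or.inl rfl, ?_⟩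
    ext i j
    exact i.elim0
  | succ g IH =>
    intro n A B hA hB hsupp
    obtain ⟨d', e', hd', he', hde'⟩ := IH (A.submatrix Fin.castSucc _root_.id)
      (B.submatrix Fin.castSucc _root_.id) (hA.submatrix _ _) (hB.submatrix _ _)
      (fun i j => hsupp _ _)
    set d₀ : Fin (g + 1) → ℝ := fun i => if h : (i : ℕ) < g then d' ⟨i, h⟩ else 1 with hd0def
    have hd₀pm : ∀ i, d₀ i = 1 ∨ d₀ i = -1 := by
      intro i
      rw [hd0def]
      beta_reduce
      split
      · exact hd' _
      · exact Or.inl rfl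
    have hd₀cast : ∀ i : Fin g, d₀ i.castSucc = d' i := by
      intro i
      rw [hd0def]
      beta_reduce
      rw [dif_pos (show (i.castSucc : ℕ) < g from i.isLt)]
      exact congrArg d' (Fin.ext rfl)
    set A₂ := Matrix.diagonal d₀ * A * Matrix.diagonal e' with hA2def
    have hA₂ : A₂.IsTotallyUnimodular := tu_scale hA hd₀pm he'
    have hA₂app : ∀ i j, A₂ i j = d₀ i * A i j * e' j := fun i j => dae_apply d₀ e' A i j
    have hd₀ne : ∀ i, d₀ i ≠ 0 := by
      intro i
      rcases hd₀pm i with h | h <;> rw [h] <;> norm_num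
    have he'ne : ∀ j, e' j ≠ 0 := by
      intro j
      rcases he' j with h | h <;> rw [h] <;> norm_num
    have hsupp₂ : ∀ i j, A₂ i j ≠ 0 ↔ B i j ≠ 0 := by
      intro i j
      rw [hA₂app, ← hsupp]
      constructor
      · intro h hc
        apply h
        rw [hc]
        ring
      · intro h
        exact mul_ne_zero (mul_ne_zero (hd₀ne i) h) (he'ne j)
    have htop₂ : ∀ i j, i ≠ Fin.last g → A₂ i j = B i j := by
      intro i j hiL
      obtain ⟨i', rfl⟩ := Fin.exists_castSucc_eq.mpr hiL
      have hentry := congrFun (congrFun hde' i') j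
      rw [dae_apply] at hentry
      rw [hA₂app, hd₀cast]
      simpa [Matrix.submatrix_apply] using hentry
    obtain ⟨d₂, e₂, hd₂, he₂, hfin⟩ := step A₂ B hA₂ hB hsupp₂ htop₂
    refine ⟨fun i => d₂ i * d₀ i, fun j => e' j * e₂ j,
      fun i => pm_mul (hd₂ i) (hd₀pm i), fun j => pm_mul (he' j) (he₂ j), ?_⟩
    ext i j
    have hBij := congrFun (congrFun hfin i) j
    rw [dae_apply] at hBij
    rw [hA₂app] at hBij
    rw [dae_apply, ← hBij]
    ring

end TruemperAux

/-- **Truemper's lemma** (Lemma 9.2.6 in Truemper): two totally unimodular matrices with the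
same support differ only by negations of rows and columns, i.e. there are diagonal `±1`
matrices `D` and `E` with `D * A * E = B`. -/
theorem tu_same_support_sign_equiv {g n : ℕ}
    (A B : Matrix (Fin g) (Fin n) ℝ)
    (hA : A.IsTotallyUnimodular) (hB : B.IsTotallyUnimodular)
    (hsupp : ∀ i j, A i j ≠ 0 ↔ B i j ≠ 0) :
    ∃ d : Fin g → ℝ, ∃ e : Fin n → ℝ,
      (∀ i, d i = 1 ∨ d i = -1) ∧ (∀ j, e j = 1 ∨ e j = -1) ∧
      Matrix.diagonal d * A * Matrix.diagonal e = B :=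
  TruemperAux.main_aux g A B hA hB hsupp
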